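/- arXiv:2508.20081 — 3 statements merged into one kernel-verified Lean document; each statement's English description precedes it below -/
import Mathlib

section
/- Let m, l, k ∈ ℝ with l ≤ m + k. Then there is a constant C > 0 such that for all h ∈ (0,1] and ζ ∈ ℝⁿ, ρ_{ℏ,∞}^{-m} ρ_{ℏ,ff}^{-l} ρ_{ℏ,0}^{-k} ≤ C ρ_∞^{-m} h^{-k}, where ρ_{ℏ,∞} = (1+h²|ζ|²)^{-1/2}, ρ_{ℏ,ff} = (h² + (1+|ζ|²)^{-1})^{1/2}, ρ_{ℏ,0} = h/(h²+(1+|ζ|²)^{-1})^{1/2}, and ρ_∞ = (1+|ζ|²)^{-1/2}. -/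
open Real Set

/-- if `l ≤ m + k` then
`ρ_{ℏ,∞}^{-m} ρ_{ℏ,ff}^{-l} ρ_{ℏ,0}^{-k} ≤ C ρ_∞^{-m} h^{-k}` uniformly,
encoding the symbol class inclusion `S^{m,l,k} ⊂ S^{m,k}`. -/
theorem stmt2 (n : ℕ) (m l k : ℝ) (hl : l ≤ m + k) :
    ∃ C : ℝ, 0 < C ∧ ∀ h ∈ Ioc (0:ℝ) 1, ∀ ζ : EuclideanSpace ℝ (Fin n),
      ((Real.sqrt (1 + h^2 * ‖ζ‖^2))⁻¹) ^ (-m) *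
        (Real.sqrt (h^2 + (1 + ‖ζ‖^2)⁻¹)) ^ (-l) *
        (h / Real.sqrt (h^2 + (1 + ‖ζ‖^2)⁻¹)) ^ (-k)
      ≤ C * ((Real.sqrt (1 + ‖ζ‖^2))⁻¹) ^ (-m) * h ^ (-k) := by
  refine ⟨Real.sqrt 2 ^ |m| * Real.sqrt 2 ^ (m + k - l), by positivity, ?_⟩
  rintro h ⟨hh0, hh1⟩ ζ
  set Z : ℝ := ‖ζ‖^2 with hZdef
  have hZ0 : 0 ≤ Z := sq_nonneg _
  have ha : (1:ℝ) ≤ 1 + h^2 * Z := by nlinarith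
  have hd : (1:ℝ) ≤ 1 + Z := by linarith
  have hdpos : (0:ℝ) < 1 + Z := by linarith
  have hb : (0:ℝ) < h^2 + (1 + Z)⁻¹ := by positivity
  set A := Real.sqrt (1 + h^2 * Z) with hAdef
  set B := Real.sqrt (h^2 + (1 + Z)⁻¹) with hBdef
  set D := Real.sqrt (1 + Z) with hDdef
  have hA0 : 0 < A := Real.sqrt_pos.2 (by linarith)
  have hB0 : 0 < B := Real.sqrt_pos.2 hb
  have hD0 : 0 < D := Real.sqrt_pos.2 hdpos
  have hsq2 : (1:ℝ) ≤ Real.sqrt 2 := by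
    rw [show (1:ℝ) = Real.sqrt 1 from (Real.sqrt_one).symm]
    exact Real.sqrt_le_sqrt (by norm_num)
  -- B ≤ √2
  have hBle : B ≤ Real.sqrt 2 := by
    apply Real.sqrt_le_sqrt
    have : (1 + Z)⁻¹ ≤ 1 := by
      rw [inv_le_one_iff₀]; right; exact hd
    nlinarith
  -- A ≤ B * D
  have hABD : A ≤ B * D := by
    rw [hBdef, hDdef, ← Real.sqrt_mul hb.le]
    apply Real.sqrt_le_sqrt
    have : (h^2 + (1 + Z)⁻¹) * (1 + Z) = h^2 * (1 + Z) + 1 := by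
      field_simp
    rw [this]; nlinarith
  -- B * D ≤ √2 * A
  have hBDA : B * D ≤ Real.sqrt 2 * A := by
    rw [hBdef, hDdef, hAdef, ← Real.sqrt_mul hb.le, ← Real.sqrt_mul (by norm_num : (0:ℝ) ≤ 2)]
    apply Real.sqrt_le_sqrt
    have : (h^2 + (1 + Z)⁻¹) * (1 + Z) = h^2 * (1 + Z) + 1 := by
      field_simp
    rw [this]; nlinarith
  -- rewrite LHS and RHS
  have e1 : (A⁻¹) ^ (-m) = A ^ m := by
    rw [← Real.rpow_neg_one A, ← Real.rpow_mul hA0.le]; norm_num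
  have e2 : (D⁻¹) ^ (-m) = D ^ m := by
    rw [← Real.rpow_neg_one D, ← Real.rpow_mul hD0.le]; norm_num
  have e3 : (h / B) ^ (-k) = h ^ (-k) * B ^ k := by
    rw [Real.div_rpow hh0.le hB0.le, Real.rpow_neg hB0.le, div_eq_mul_inv, inv_inv, mul_comm]
  rw [e1, e2, e3]
  have e4 : B ^ (-l) * (h ^ (-k) * B ^ k) = B ^ (k - l) * h ^ (-k) := by
    rw [show k - l = -l + k by ring, Real.rpow_add hB0]; ring
  rw [mul_assoc, e4, ← mul_assoc]
  have hhk : (0:ℝ) < h ^ (-k) := Real.rpow_pos_of_pos hh0 _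
  rw [mul_le_mul_iff_of_pos_right hhk]
  -- main inequality: A^m * B^(k-l) ≤ C * D^m
  have key1 : A ^ m ≤ Real.sqrt 2 ^ |m| * (B * D) ^ m := by
    rcases le_or_gt 0 m with hm | hm
    · rw [abs_of_nonneg hm]
      calc A ^ m ≤ (B * D) ^ m := Real.rpow_le_rpow hA0.le hABD hm
        _ ≤ Real.sqrt 2 ^ m * (B * D) ^ m := by
            nlinarith [Real.one_le_rpow hsq2 hm, Real.rpow_pos_of_pos (mul_pos hB0 hD0) m]
    · rw [abs_of_neg hm]
      have := Real.rpow_le_rpow_of_nonpos (mul_pos hB0 hD0) hBDA hm.le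
      rw [Real.mul_rpow (by positivity) hA0.le] at this
      calc A ^ m = (Real.sqrt 2 ^ m)⁻¹ * (Real.sqrt 2 ^ m * A ^ m) := by
            field_simp
        _ ≤ (Real.sqrt 2 ^ m)⁻¹ * (B * D) ^ m := by
            apply mul_le_mul_of_nonneg_left this (by positivity)
        _ = Real.sqrt 2 ^ (-m) * (B * D) ^ m := by
            rw [Real.rpow_neg (by positivity)]
  have key2 : B ^ (m + k - l) ≤ Real.sqrt 2 ^ (m + k - l) :=
    Real.rpow_le_rpow hB0.le hBle (by linarith)
  calc A ^ m * B ^ (k - l)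
      ≤ (Real.sqrt 2 ^ |m| * (B * D) ^ m) * B ^ (k - l) := by
        apply mul_le_mul_of_nonneg_right key1 (by positivity)
    _ = Real.sqrt 2 ^ |m| * B ^ (m + k - l) * D ^ m := by
        rw [Real.mul_rpow hB0.le hD0.le, show m + k - l = m + (k - l) by ring,
          Real.rpow_add hB0]; ring
    _ ≤ Real.sqrt 2 ^ |m| * Real.sqrt 2 ^ (m + k - l) * D ^ m := by
        apply mul_le_mul_of_nonneg_right _ (by positivity)
        exact mul_le_mul_of_nonneg_left key2 (by positivity)
end

section
/- Let m, l, k ∈ ℝ with l ≥ m + k. Then there is a constant C > 0 such that for all h ∈ (0,1] and ζ ∈ ℝⁿ, ρ_{ℏ,∞}^{-m} ρ_{ℏ,ff}^{-l} ρ_{ℏ,0}^{-k} ≤ C ρ_∞^{-(l-k)} h^{-k}, with ρ_{ℏ,∞}, ρ_{ℏ,ff}, ρ_{ℏ,0}, ρ_∞ as in the resolved semiclassical-classical phase space (ρ_{ℏ,∞} = (1+h²|ζ|²)^{-1/2}, ρ_{ℏ,ff} = (h²+(1+|ζ|²)^{-1})^{1/2}, ρ_{ℏ,0} = h/(h²+(1+|ζ|²)^{-1})^{1/2},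 ρ_∞ = (1+|ζ|²)^{-1/2}). -/
open Real Set

lemma stmt3_aux (x s m e : ℝ) (hx : 0 < x) (hxs : x ≤ s) (hsx : s ≤ 2 * x)
    (hs1 : 1 ≤ s) (hme : m ≤ e) : x ^ m ≤ 2 ^ |m| * s ^ e := by
  have hs : 0 < s := lt_of_lt_of_le one_pos hs1
  have hC1 : (1:ℝ) ≤ 2 ^ |m| := by
    calc (1:ℝ) = 2 ^ (0:ℝ) := (Real.rpow_zero 2).symm
      _ ≤ 2 ^ |m| := Real.rpow_le_rpow_of_exponent_le one_le_two (abs_nonneg m)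
  have h1 : x ^ m ≤ 2 ^ |m| * s ^ m := by
    rcases le_or_gt 0 m with hm | hm
    · calc x ^ m ≤ s ^ m := Real.rpow_le_rpow hx.le hxs hm
        _ ≤ 2 ^ |m| * s ^ m :=
          le_mul_of_one_le_left (Real.rpow_nonneg hs.le m) hC1
    · have hs2 : s / 2 ≤ x := by linarith
      have hs2pos : 0 < s / 2 := by linarith
      calc x ^ m ≤ (s / 2) ^ m :=
            Real.rpow_le_rpow_of_nonpos hs2pos hs2 hm.le
        _ = s ^ m / 2 ^ m := Real.div_rpow hs.le (by norm_num) m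
        _ = 2 ^ (-m) * s ^ m := by
            rw [Real.rpow_neg (by norm_num : (0:ℝ) ≤ 2)]
            ring
        _ = 2 ^ |m| * s ^ m := by rw [abs_of_neg hm]
  calc x ^ m ≤ 2 ^ |m| * s ^ m := h1
    _ ≤ 2 ^ |m| * s ^ e :=
        mul_le_mul_of_nonneg_left (Real.rpow_le_rpow_of_exponent_le hs1 hme)
          (by positivity)

/-- if `l ≥ m + k` then
`ρ_{ℏ,∞}^{-m} ρ_{ℏ,ff}^{-l} ρ_{ℏ,0}^{-k} ≤ C ρ_∞^{-(l-k)} h^{-k}` uniformly,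
encoding the symbol class inclusion `S^{m,l,k} ⊂ S^{m+(l-(m+k)),k}`. -/
theorem stmt3 (n : ℕ) (m l k : ℝ) (hl : m + k ≤ l) :
    ∃ C : ℝ, 0 < C ∧ ∀ h ∈ Ioc (0:ℝ) 1, ∀ ζ : EuclideanSpace ℝ (Fin n),
      ((Real.sqrt (1 + h^2 * ‖ζ‖^2))⁻¹) ^ (-m) *
        (Real.sqrt (h^2 + (1 + ‖ζ‖^2)⁻¹)) ^ (-l) *
        (h / Real.sqrt (h^2 + (1 + ‖ζ‖^2)⁻¹)) ^ (-k)
      ≤ C * ((Real.sqrt (1 + ‖ζ‖^2))⁻¹) ^ (-(l - k)) * h ^ (-k) := by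
  refine ⟨2 ^ |m|, Real.rpow_pos_of_pos two_pos _, ?_⟩
  rintro h ⟨hh0, hh1⟩ ζ
  set Z : ℝ := ‖ζ‖ ^ 2 with hZdef
  have hZ0 : 0 ≤ Z := sq_nonneg _
  have h1Z : (0:ℝ) < 1 + Z := by linarith
  have hApos : 0 < Real.sqrt (1 + h ^ 2 * Z) := Real.sqrt_pos.2 (by positivity)
  have hBpos : 0 < Real.sqrt (h ^ 2 + (1 + Z)⁻¹) := Real.sqrt_pos.2 (by positivity)
  have hrpos : 0 < Real.sqrt (1 + Z) := Real.sqrt_pos.2 h1Z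
  set A := Real.sqrt (1 + h ^ 2 * Z)
  set B := Real.sqrt (h ^ 2 + (1 + Z)⁻¹)
  set r := Real.sqrt (1 + Z)
  -- rewrite LHS and RHS
  have e1 : (A⁻¹) ^ (-m) = A ^ m := by
    rw [Real.inv_rpow hApos.le, ← Real.rpow_neg hApos.le, neg_neg]
  have e2 : (h / B) ^ (-k) = h ^ (-k) * B ^ k := by
    rw [Real.div_rpow hh0.le hBpos.le, div_eq_mul_inv,
      ← Real.rpow_neg hBpos.le, neg_neg]
  have e3 : (r⁻¹) ^ (-(l - k)) = r ^ (l - k) := by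
    rw [Real.inv_rpow hrpos.le, ← Real.rpow_neg hrpos.le, neg_neg]
  rw [e1, e2, e3]
  -- key: r * B = sqrt (1 + h^2 * (1 + Z))
  have hrB : r * B = Real.sqrt (1 + h ^ 2 * (1 + Z)) := by
    rw [← Real.sqrt_mul h1Z.le]
    congr 1
    field_simp
    ring
  set s := Real.sqrt (1 + h ^ 2 * (1 + Z)) with hsdef
  have hhsq : h ^ 2 ≤ 1 := by nlinarith
  have hs1 : 1 ≤ s := by
    calc (1:ℝ) = Real.sqrt 1 := Real.sqrt_one.symm
      _ ≤ s := Real.sqrt_le_sqrt (by nlinarith)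
  have hAs : A ≤ s := Real.sqrt_le_sqrt (by nlinarith)
  have hsA : s ≤ 2 * A := by
    have h4 : Real.sqrt 4 = 2 := by
      rw [show (4:ℝ) = 2 ^ 2 by norm_num, Real.sqrt_sq (by norm_num)]
    calc s ≤ Real.sqrt (4 * (1 + h ^ 2 * Z)) :=
          Real.sqrt_le_sqrt (by nlinarith)
      _ = 2 * A := by rw [Real.sqrt_mul (by norm_num), h4]
  -- main inequality
  have key : A ^ m ≤ 2 ^ |m| * s ^ (l - k) :=
    stmt3_aux A s m (l - k) hApos hAs hsA hs1 (by linarith)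
  have hBkl : B ^ (-l) * B ^ k = B ^ (k - l) := by
    rw [← Real.rpow_add hBpos]; ring_nf
  have hsplit : s ^ (l - k) = r ^ (l - k) * B ^ (l - k) := by
    rw [← Real.mul_rpow hrpos.le hBpos.le, hrB]
  have hBlk : (0:ℝ) < B ^ (l - k) := Real.rpow_pos_of_pos hBpos _
  have hhk : (0:ℝ) < h ^ (-k) := Real.rpow_pos_of_pos hh0 _
  calc A ^ m * B ^ (-l) * (h ^ (-k) * B ^ k)
      = (A ^ m * (B ^ (-l) * B ^ k)) * h ^ (-k) := by ring
    _ = (A ^ m * B ^ (k - l)) * h ^ (-k) := by rw [hBkl]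
    _ ≤ (2 ^ |m| * r ^ (l - k)) * h ^ (-k) := by
        gcongr ?_ * _
        have hBineq : B ^ (k - l) = (B ^ (l - k))⁻¹ := by
          rw [← Real.rpow_neg hBpos.le]; ring_nf
        rw [hBineq, mul_inv_le_iff₀ hBlk]
        calc A ^ m ≤ 2 ^ |m| * s ^ (l - k) := key
          _ = 2 ^ |m| * r ^ (l - k) * B ^ (l - k) := by rw [hsplit]; ring
    _ = 2 ^ |m| * r ^ (l - k) * h ^ (-k) := by ring
end

section
/- For h ∈ (0,1] and ζ ∈ ℝⁿ define ρ_∞ = (1+|ζ|²)^{-1/2}, ρ_{ℏ,∞} = (1+h²|ζ|²)^{-1/2}, ρ_{ℏ,ff} = (h²+(1+|ζ|²)^{-1})^{1/2}, ρ_{ℏ,0} = h/ρ_{ℏ,ff}. Then for any m, k ∈ ℝ there exist c, C > 0 independent of h, ζ such that c·ρ_∞^{-m} h^{-k} ≤ ρ_{ℏ,∞}^{-m} ρ_{ℏ,ff}^{-(m+k)} ρ_{ℏ,0}^{-k} ≤ C·ρ_∞^{-m} h^{-k}. -/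
open Real Set

/-- with the boundary defining functions of the resolved
semiclassical-classical phase space, for any `m, k ∈ ℝ`,
`ρ_{ℏ,∞}^{-m} ρ_{ℏ,ff}^{-(m+k)} ρ_{ℏ,0}^{-k} ≍ ρ_∞^{-m} h^{-k}` uniformly:
the quantitative content of `S^{m,k} = S^{m,m+k,k}`. -/
theorem stmt14 (n : ℕ) (m k : ℝ) :
    ∃ c C : ℝ, 0 < c ∧ 0 < C ∧ ∀ h ∈ Ioc (0:ℝ) 1, ∀ ζ : EuclideanSpace ℝ (Fin n),
      c * ((Real.sqrt (1 + ‖ζ‖^2))⁻¹) ^ (-m) * h ^ (-k) ≤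
        ((Real.sqrt (1 + h^2 * ‖ζ‖^2))⁻¹) ^ (-m) *
          (Real.sqrt (h^2 + (1 + ‖ζ‖^2)⁻¹)) ^ (-(m + k)) *
          (h / Real.sqrt (h^2 + (1 + ‖ζ‖^2)⁻¹)) ^ (-k) ∧
      ((Real.sqrt (1 + h^2 * ‖ζ‖^2))⁻¹) ^ (-m) *
          (Real.sqrt (h^2 + (1 + ‖ζ‖^2)⁻¹)) ^ (-(m + k)) *
          (h / Real.sqrt (h^2 + (1 + ‖ζ‖^2)⁻¹)) ^ (-k) ≤
        C * ((Real.sqrt (1 + ‖ζ‖^2))⁻¹) ^ (-m) * h ^ (-k) := by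
  refine ⟨(2:ℝ)^(-|m|), (2:ℝ)^(|m|), Real.rpow_pos_of_pos two_pos _,
    Real.rpow_pos_of_pos two_pos _, ?_⟩
  rintro h ⟨hh0, hh1⟩ ζ
  set s : ℝ := ‖ζ‖^2 with hsdef
  have hs0 : (0:ℝ) ≤ s := by positivity
  have hA0 : (0:ℝ) < 1 + h^2*s := by positivity
  have hF0 : (0:ℝ) < h^2 + (1+s)⁻¹ := by positivity
  have hT0 : (0:ℝ) < 1 + s := by positivity
  set A := Real.sqrt (1 + h^2*s) with hAdef
  set F := Real.sqrt (h^2 + (1+s)⁻¹) with hFdef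
  set T := Real.sqrt (1+s) with hTdef
  have hA : 0 < A := Real.sqrt_pos.mpr hA0
  have hF : 0 < F := Real.sqrt_pos.mpr hF0
  have hT : 0 < T := Real.sqrt_pos.mpr hT0
  -- rewrite all rpow's as exponentials
  have eA : (A⁻¹)^(-m) = Real.exp (m * Real.log A) := by
    rw [Real.rpow_def_of_pos (inv_pos.mpr hA), Real.log_inv]
    congr 1; ring
  have eF : F^(-(m+k)) = Real.exp (Real.log F * (-(m+k))) :=
    Real.rpow_def_of_pos hF _
  have eHF : (h/F)^(-k) = Real.exp ((Real.log h - Real.log F) * (-k)) := by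
    rw [Real.rpow_def_of_pos (div_pos hh0 hF), Real.log_div hh0.ne' hF.ne']
  have eT : (T⁻¹)^(-m) = Real.exp (m * Real.log T) := by
    rw [Real.rpow_def_of_pos (inv_pos.mpr hT), Real.log_inv]
    congr 1; ring
  have eh : h^(-k) = Real.exp (Real.log h * (-k)) := Real.rpow_def_of_pos hh0 _
  -- the key bound on log Q where Q = A / (F*T)
  have hFT : F * T = Real.sqrt ((h^2 + (1+s)⁻¹) * (1+s)) :=
    (Real.sqrt_mul hF0.le _).symm
  have hprod : (h^2 + (1+s)⁻¹) * (1+s) = h^2*(1+s) + 1 := by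
    field_simp
  have hQ1 : A ≤ F * T := by
    rw [hFT, hprod]
    apply Real.sqrt_le_sqrt
    nlinarith [sq_nonneg h, hs0]
  have hQ2 : F * T ≤ 2 * A := by
    have h4 : (2:ℝ) * A = Real.sqrt (4 * (1 + h^2*s)) := by
      rw [show (4:ℝ) = 2^2 by norm_num, Real.sqrt_mul (by positivity),
        Real.sqrt_sq (by norm_num : (0:ℝ) ≤ 2)]
    rw [hFT, hprod, h4]
    apply Real.sqrt_le_sqrt
    nlinarith [sq_nonneg h, hs0, mul_le_one₀ hh1 hh0.le hh1, sq_nonneg (h*1)]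
  have hlogQ_ub : Real.log A - Real.log F - Real.log T ≤ 0 := by
    have := Real.log_le_log hA hQ1
    rw [Real.log_mul hF.ne' hT.ne'] at this
    linarith
  have hlogQ_lb : -Real.log 2 ≤ Real.log A - Real.log F - Real.log T := by
    have := Real.log_le_log (by positivity) hQ2
    rw [Real.log_mul hF.ne' hT.ne', Real.log_mul (by norm_num) hA.ne'] at this
    linarith
  have hkey : |m * (Real.log A - Real.log F - Real.log T)| ≤ |m| * Real.log 2 := by
    rw [abs_mul]
    apply mul_le_mul_of_nonneg_left _ (abs_nonneg m)
    rw [abs_le]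
    constructor <;> linarith
  rw [abs_le] at hkey
  obtain ⟨hk1, hk2⟩ := hkey
  have e2neg : (2:ℝ)^(-|m|) = Real.exp (-(|m| * Real.log 2)) := by
    rw [Real.rpow_def_of_pos two_pos]; congr 1; ring
  have e2pos : (2:ℝ)^(|m|) = Real.exp (|m| * Real.log 2) := by
    rw [Real.rpow_def_of_pos two_pos]; congr 1; ring
  rw [eA, eF, eHF, eT, eh, e2neg, e2pos, ← Real.exp_add, ← Real.exp_add,
    ← Real.exp_add, ← Real.exp_add, ← Real.exp_add, ← Real.exp_add]
  constructor <;> rw [Real.exp_le_exp] <;> ring_nf at hk1 hk2 ⊢ <;> linarith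
end
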